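/- For the closed topology on the topos of graphs, the sheaves are exactly the graphs with precisely one node, and the category of these sheaves is equivalent to the category of sets via the arc functor; the only separated non-sheaf is the empty graph. -/

import Mathlib

/-- A directed graph: nodes, arcs, source and target maps. -/
structure Graph' where
  N : Type
  A : Type
  src : A → N
  tgt : A → N

/-- A graph morphism. -/
@[ext]
structure Hom (G H : Graph') where
  fN : G.N → H.N
  fA : G.A → H.A
  hsrc : ∀ a, H.src (fA a) = fN (G.src a)
  htgt : ∀ a, H.tgt (fA a) = fN (G.tgt a)

/-- Composition of graph morphisms. -/
def Hom.comp {G H K : Graph'} (g : Hom H K) (f : Hom G H) : Hom G K where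
  fN := g.fN ∘ f.fN
  fA := g.fA ∘ f.fA
  hsrc a := by simp [g.hsrc, f.hsrc]
  htgt a := by simp [g.htgt, f.htgt]

/-- A subgraph of `G`, given by a set of nodes and a set of arcs whose
endpoints belong to the node set. -/
def IsSubgraph (G : Graph') (SN : Set G.N) (SA : Set G.A) : Prop :=
  ∀ a ∈ SA, G.src a ∈ SN ∧ G.tgt a ∈ SN

/-- The subgraph of `Y` determined by node set `SN` and arc set `SA`. -/
def subG (Y : Graph') (SN : Set Y.N) (SA : Set Y.A) (h : IsSubgraph Y SN SA) : Graph' where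
  N := SN
  A := SA
  src a := ⟨Y.src a.val, (h a.val a.prop).1⟩
  tgt a := ⟨Y.tgt a.val, (h a.val a.prop).2⟩

/-- The inclusion of a subgraph. -/
def incl (Y : Graph') (SN : Set Y.N) (SA : Set Y.A) (h : IsSubgraph Y SN SA) :
    Hom (subG Y SN SA h) Y :=
  ⟨Subtype.val, Subtype.val, fun _ => rfl, fun _ => rfl⟩

/-- `G` is a sheaf for the closed topology: every morphism from a dense subgraph
(one containing all arcs) of any graph `Y` extends uniquely to `Y`. -/
def SheafC (G : Graph') : Prop :=
  ∀ (Y : Graph') (SN : Set Y.N) (h : IsSubgraph Y SN Set.univ)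
    (f : Hom (subG Y SN Set.univ h) G),
      ∃! g : Hom Y G, g.comp (incl Y SN Set.univ h) = f

/-- `G` is separated for the closed topology. -/
def SeparatedC (G : Graph') : Prop :=
  ∀ (Y : Graph') (SN : Set Y.N) (h : IsSubgraph Y SN Set.univ)
    (g₁ g₂ : Hom Y G),
      g₁.comp (incl Y SN Set.univ h) = g₂.comp (incl Y SN Set.univ h) → g₁ = g₂

/-- The one-point graph with no arcs. -/
def Y₀ : Graph' := ⟨PUnit, Empty, Empty.elim, Empty.elim⟩

lemma hY₀ : IsSubgraph Y₀ ∅ Set.univ := fun a _ => a.elim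

/-- Any two morphisms out of the empty subgraph of `Y₀` coincide. -/
lemma empty_hom_eq {G : Graph'} (f g : Hom (subG Y₀ ∅ Set.univ hY₀) G) : f = g := by
  apply Hom.ext
  · funext x; exact x.2.elim
  · funext a; exact a.1.elim

/-- A constant morphism `Y₀ → G` at a node `n`. -/
def constHom (G : Graph') (n : G.N) : Hom Y₀ G :=
  ⟨fun _ => n, Empty.elim, fun a => a.elim, fun a => a.elim⟩

lemma sheaf_iff (G : Graph') : SheafC G ↔ ∃ n : G.N, ∀ m : G.N, m = n := by
  constructor
  · intro hs
    obtain ⟨g, hg, huniq⟩ := hs Y₀ ∅ hY₀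
      ⟨fun x => x.2.elim, fun a => a.1.elim, fun a => a.1.elim, fun a => a.1.elim⟩
    refine ⟨g.fN PUnit.unit, fun m => ?_⟩
    have := huniq (constHom G m) (empty_hom_eq _ _)
    exact congrFun (congrArg Hom.fN this) PUnit.unit
  · rintro ⟨n, hn⟩ Y SN h f
    refine ⟨⟨fun _ => n, fun a => f.fA ⟨a, trivial⟩,
      fun a => (hn _).trans (hn _).symm, fun a => (hn _).trans (hn _).symm⟩, ?_, ?_⟩
    · apply Hom.ext
      · funext x; exact (hn (f.fN x)).symm
      · funext a; exact congrArg f.fA (Subtype.ext rfl)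
    · intro g' hg'
      apply Hom.ext
      · funext y; exact (hn _).trans (hn _).symm
      · funext a
        have := congrFun (congrArg Hom.fA hg') ⟨a, trivial⟩
        exact this

/-- sheaves for the closed topology are exactly the one-node
graphs; their category is equivalent to sets via the arc functor (fully
faithful and essentially surjective on sheaves); and the only separated
non-sheaf is the empty graph. -/
theorem closed_sheaves :
    (∀ G : Graph', SheafC G ↔ ∃ n : G.N, ∀ m : G.N, m = n) ∧
    (∀ G H : Graph', SheafC G → SheafC H →
        Function.Bijective (fun f : Hom G H => f.fA)) ∧
    (∀ X : Type, ∃ G : Graph', SheafC G ∧ Nonempty (G.A ≃ X)) ∧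
    (∀ G : Graph', (SeparatedC G ∧ ¬ SheafC G) ↔ (IsEmpty G.N ∧ IsEmpty G.A)) := by
  refine ⟨sheaf_iff, ?_, ?_, ?_⟩
  · intro G H hG hH
    obtain ⟨nG, hnG⟩ := (sheaf_iff G).1 hG
    obtain ⟨nH, hnH⟩ := (sheaf_iff H).1 hH
    constructor
    · intro f₁ f₂ hf
      apply Hom.ext
      · funext x; exact (hnH _).trans (hnH _).symm
      · exact hf
    · intro k
      exact ⟨⟨fun _ => nH, k, fun a => (hnH _).trans (hnH _).symm,
        fun a => (hnH _).trans (hnH _).symm⟩, rfl⟩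
  · intro X
    refine ⟨⟨PUnit, X, fun _ => PUnit.unit, fun _ => PUnit.unit⟩, ?_, ⟨Equiv.refl X⟩⟩
    exact (sheaf_iff _).2 ⟨PUnit.unit, fun _ => rfl⟩
  · intro G
    constructor
    · rintro ⟨hsep, hnsh⟩
      have hsub : ∀ m n : G.N, m = n := by
        intro m n
        have := hsep Y₀ ∅ hY₀ (constHom G m) (constHom G n) (empty_hom_eq _ _)
        exact congrFun (congrArg Hom.fN this) PUnit.unit
      have hNempty : IsEmpty G.N := by
        by_contra hne
        rw [not_isEmpty_iff] at hne
        obtain ⟨n⟩ := hne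
        exact hnsh ((sheaf_iff G).2 ⟨n, fun m => hsub m n⟩)
      exact ⟨hNempty, ⟨fun a => hNempty.false (G.src a)⟩⟩
    · rintro ⟨hN, hA⟩
      constructor
      · intro Y SN h g₁ g₂ _
        apply Hom.ext
        · funext y; exact (hN.false (g₁.fN y)).elim
        · funext a; exact (hA.false (g₁.fA a)).elim
      · intro hs
        obtain ⟨n, _⟩ := (sheaf_iff G).1 hs
        exact hN.false n
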